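/- Suppose Y ~ N_n(β*, σ²I) and W ~ N_n(0, γ²I) independent of Y. Then the statistic β̂* = Y - (σ²/γ²)W is an unbiased estimator of β* and is independent of Y* = Y + W; consequently E[β̂* | A(Y+W) ≤ b] = β* for any matrix A and vector b with P(A Y* ≤ b) > 0, i.e., β̂* remains unbiased conditional on any selection event determined by Y*. -/

import Mathlib

open MeasureTheory ProbabilityTheory Matrix Real

namespace Stmt16Aux

variable {n : ℕ}

local notation "E" => EuclideanSpace ℝ (Fin n)

/-- Gaussian density with mean `m` and variance `t` on `EuclideanSpace ℝ (Fin n)`. -/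
noncomputable def gd (n : ℕ) (m : EuclideanSpace ℝ (Fin n)) (t : ℝ)
    (x : EuclideanSpace ℝ (Fin n)) : ℝ :=
  (2 * π * t) ^ (-(n : ℝ) / 2) * Real.exp (-‖x - m‖ ^ 2 / (2 * t))

lemma gd_nonneg (m : E) {t : ℝ} (ht : 0 < t) (x : E) : 0 ≤ gd n m t x := by
  unfold gd; positivity

lemma continuous_gd (m : E) (t : ℝ) : Continuous (gd n m t) := by
  unfold gd; fun_prop

lemma measurable_gd (m : E) (t : ℝ) : Measurable (gd n m t) :=
  (continuous_gd m t).measurable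

lemma integrable_expnorm {b : ℝ} (hb : 0 < b) :
    Integrable (fun x : E => Real.exp (-b * ‖x‖ ^ 2)) volume := by
  have h := (GaussianFourier.integrable_cexp_neg_mul_sq_norm_add (b := (b : ℂ))
    (by simpa using hb) 0 (0 : E)).norm
  refine h.congr (Filter.Eventually.of_forall fun v => ?_)
  simp [Complex.norm_exp, ← Complex.ofReal_pow]

lemma integrable_gd (m : E) {t : ℝ} (ht : 0 < t) : Integrable (gd n m t) volume := by
  unfold gd
  apply Integrable.const_mul
  have h := (integrable_expnorm (n := n) (b := 1 / (2 * t)) (by positivity)).comp_add_right (-m)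
  refine h.congr (Filter.Eventually.of_forall fun x => ?_)
  simp only [sub_eq_add_neg]
  congr 1
  ring

lemma integral_gd (m : E) {t : ℝ} (ht : 0 < t) : ∫ x, gd n m t x = 1 := by
  unfold gd
  rw [MeasureTheory.integral_const_mul]
  have h1 : ∫ x : E, rexp (-‖x - m‖ ^ 2 / (2 * t))
      = ∫ x : E, rexp (-(1 / (2 * t)) * ‖x‖ ^ 2) := by
    rw [← integral_add_right_eq_self (fun x : E => rexp (-(1 / (2 * t)) * ‖x‖ ^ 2)) (-m)]
    congr 1
    funext x
    rw [← sub_eq_add_neg]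
    congr 1
    ring
  rw [h1, GaussianFourier.integral_rexp_neg_mul_sq_norm (by positivity),
    finrank_euclideanSpace_fin, show π / (1 / (2 * t)) = 2 * π * t by field_simp,
    ← Real.rpow_add (by positivity), show -(n:ℝ)/2 + (n:ℝ)/2 = 0 by ring, Real.rpow_zero]

lemma lintegral_gd (m : E) {t : ℝ} (ht : 0 < t) :
    ∫⁻ x, ENNReal.ofReal (gd n m t x) = 1 := by
  rw [← ofReal_integral_eq_lintegral_ofReal (integrable_gd m ht)
    (Filter.Eventually.of_forall (gd_nonneg m ht)), integral_gd m ht]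
  simp

/-- The Gaussian measure with mean `m` and variance `t`. -/
noncomputable def gm (n : ℕ) (m : EuclideanSpace ℝ (Fin n)) (t : ℝ) :
    Measure (EuclideanSpace ℝ (Fin n)) :=
  volume.withDensity fun x => ENNReal.ofReal (gd n m t x)

lemma isProb_gm (m : E) {t : ℝ} (ht : 0 < t) : IsProbabilityMeasure (gm n m t) :=
  ⟨by rw [gm, withDensity_apply _ MeasurableSet.univ, Measure.restrict_univ, lintegral_gd m ht]⟩

lemma gm_prod (m₁ m₂ : E) {t₁ t₂ : ℝ} (h₁ : 0 < t₁) (h₂ : 0 < t₂) :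
    (gm n m₁ t₁).prod (gm n m₂ t₂) =
      (volume : Measure (E × E)).withDensity
        fun p => ENNReal.ofReal (gd n m₁ t₁ p.1 * gd n m₂ t₂ p.2) := by
  haveI := isProb_gm (n := n) m₁ h₁
  haveI := isProb_gm (n := n) m₂ h₂
  refine Measure.prod_eq fun s u hs hu => ?_
  rw [Measure.volume_eq_prod, withDensity_apply _ (hs.prod hu), ← Measure.prod_restrict]
  have hsplit : ∀ p : E × E, ENNReal.ofReal (gd n m₁ t₁ p.1 * gd n m₂ t₂ p.2)
      = ENNReal.ofReal (gd n m₁ t₁ p.1) * ENNReal.ofReal (gd n m₂ t₂ p.2) :=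
    fun p => ENNReal.ofReal_mul (gd_nonneg _ h₁ _)
  simp_rw [hsplit]
  rw [lintegral_prod_mul ((measurable_gd m₁ t₁).ennreal_ofReal).aemeasurable
    ((measurable_gd m₂ t₂).ennreal_ofReal).aemeasurable]
  rw [gm, gm, withDensity_apply _ hs, withDensity_apply _ hu]

lemma gd_shift (m : E) (t : ℝ) (x : E) : gd n m t (x + m) = gd n 0 t x := by
  simp [gd]

lemma gd_neg (t : ℝ) (x : E) : gd n 0 t (-x) = gd n 0 t x := by
  simp [gd]

lemma integrable_gd_smul {t : ℝ} (ht : 0 < t) :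
    Integrable (fun x : E => gd n 0 t x • x) volume := by
  refine Integrable.mono'
    (((integrable_expnorm (n := n) (b := 1 / (4 * t)) (by positivity)).const_mul
      ((2 * π * t) ^ (-(n : ℝ) / 2) * (1 + 4 * t)))) ?_
    (Filter.Eventually.of_forall fun x => ?_)
  · exact ((continuous_gd 0 t).smul continuous_id).aestronglyMeasurable
  · rw [norm_smul, Real.norm_of_nonneg (gd_nonneg 0 ht x)]
    unfold gd
    rw [sub_zero]
    set r := ‖x‖ with hr
    have hr0 : 0 ≤ r := norm_nonneg x
    have hC : (0:ℝ) < (2 * π * t) ^ (-(n : ℝ) / 2) := by positivity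
    have hsplit : rexp (-r ^ 2 / (2 * t)) =
        rexp (-(1 / (4 * t)) * r ^ 2) * rexp (-(1 / (4 * t)) * r ^ 2) := by
      rw [← Real.exp_add]; congr 1; field_simp; ring
    have hkey : r * rexp (-(1 / (4 * t)) * r ^ 2) ≤ 1 + 4 * t := by
      have h1 : 1 + (1 / (4 * t)) * r ^ 2 ≤ rexp ((1 / (4 * t)) * r ^ 2) := by
        have := Real.add_one_le_exp ((1 / (4 * t)) * r ^ 2)
        linarith
      have h2 : rexp (-(1 / (4 * t)) * r ^ 2) = (rexp ((1 / (4 * t)) * r ^ 2))⁻¹ := by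
        rw [← Real.exp_neg]; ring_nf
      rw [h2]
      have hepos : (0:ℝ) < rexp ((1 / (4 * t)) * r ^ 2) := Real.exp_pos _
      rw [mul_inv_le_iff₀ hepos]
      have h3 : r ≤ (1 + 4 * t) * (1 + (1 / (4 * t)) * r ^ 2) := by
        have e1 : (1 + 4 * t) * (1 + (1 / (4 * t)) * r ^ 2)
            = 1 + (1 / (4 * t)) * r ^ 2 + 4 * t + r ^ 2 := by
          field_simp; ring
        have e2 : 0 ≤ (1 / (4 * t)) * r ^ 2 := by positivity
        nlinarith [sq_nonneg (r - 1)]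
      calc r ≤ (1 + 4 * t) * (1 + (1 / (4 * t)) * r ^ 2) := h3
        _ ≤ (1 + 4 * t) * rexp ((1 / (4 * t)) * r ^ 2) := by
            refine mul_le_mul_of_nonneg_left h1 (by positivity)
    have hmain : rexp (-r ^ 2 / (2 * t)) * r ≤ (1 + 4 * t) * rexp (-(1 / (4 * t)) * r ^ 2) :=
      calc rexp (-r ^ 2 / (2 * t)) * r
          = (r * rexp (-(1 / (4 * t)) * r ^ 2)) * rexp (-(1 / (4 * t)) * r ^ 2) := by
            rw [hsplit]; ring
        _ ≤ (1 + 4 * t) * rexp (-(1 / (4 * t)) * r ^ 2) := by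
            exact mul_le_mul_of_nonneg_right hkey (Real.exp_pos _).le
    nlinarith [mul_le_mul_of_nonneg_left hmain hC.le]

lemma integral_gd_smul {t : ℝ} (ht : 0 < t) :
    ∫ x : E, gd n 0 t x • x = 0 := by
  have h := integral_neg_eq_self (fun x : E => gd n 0 t x • x) volume
  have h2 : ∫ x : E, gd n 0 t (-x) • (-x) = - ∫ x : E, gd n 0 t x • x := by
    rw [← integral_neg]
    congr 1
    funext x
    rw [gd_neg, smul_neg]
  rw [h2] at h
  have h4 : (2:ℝ) • (∫ x : E, gd n 0 t x • x) = 0 := by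
    rw [two_smul]
    nth_rewrite 1 [← h]
    exact neg_add_cancel _
  exact (smul_eq_zero.mp h4).resolve_left (by norm_num)


lemma integrable_gd_smul' (m : E) {t : ℝ} (ht : 0 < t) :
    Integrable (fun x : E => gd n m t x • x) volume := by
  have hg : Integrable (fun x : E => gd n 0 t x • (x + m)) volume := by
    refine ((integrable_gd_smul ht).add ((integrable_gd 0 ht).smul_const m)).congr
      (Filter.Eventually.of_forall fun x => ?_)
    simp [smul_add]
  have h2 := hg.comp_add_right (-m)
  refine h2.congr (Filter.Eventually.of_forall fun x => ?_)
  show gd n 0 t (x + -m) • (x + -m + m) = gd n m t x • x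
  have hgd : gd n 0 t (x + -m) = gd n m t x := by
    simp [gd, sub_eq_add_neg]
  rw [hgd]
  congr 1
  abel

lemma gm_density_eq (m : E) (t : ℝ) :
    (fun x : E => ENNReal.ofReal (gd n m t x))
      = fun x : E => ((Real.toNNReal (gd n m t x) : NNReal) : ENNReal) := rfl

lemma integrable_id_gm (m : E) {t : ℝ} (ht : 0 < t) :
    Integrable (fun x => x) (gm n m t) := by
  rw [gm, gm_density_eq]
  rw [integrable_withDensity_iff_integrable_smul ((measurable_gd m t).real_toNNReal)]
  refine (integrable_gd_smul' m ht).congr (Filter.Eventually.of_forall fun x => ?_)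
  show gd n m t x • x = Real.toNNReal (gd n m t x) • x
  rw [NNReal.smul_def, Real.coe_toNNReal _ (gd_nonneg m ht x)]

lemma integral_id_gm (m : E) {t : ℝ} (ht : 0 < t) :
    ∫ x, x ∂(gm n m t) = m := by
  rw [gm, gm_density_eq,
    integral_withDensity_eq_integral_smul ((measurable_gd m t).real_toNNReal) (fun x => x)]
  have hsmul : ∀ x : E, (Real.toNNReal (gd n m t x)) • x = gd n m t x • x := fun x => by
    rw [NNReal.smul_def, Real.coe_toNNReal _ (gd_nonneg m ht x)]
  simp_rw [hsmul]
  rw [← integral_add_right_eq_self (fun x : E => gd n m t x • x) m]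
  have hpt : ∀ x : E, gd n m t (x + m) • (x + m) = gd n 0 t x • x + gd n 0 t x • m := by
    intro x
    rw [gd_shift, smul_add]
  simp_rw [hpt]
  rw [integral_add (integrable_gd_smul ht) ((integrable_gd 0 ht).smul_const m),
    integral_gd_smul ht, integral_smul_const, integral_gd 0 ht, zero_add, one_smul]


noncomputable def Tequiv (n : ℕ) (c : ℝ) (hc : 0 < 1 + c) :
    (EuclideanSpace ℝ (Fin n) × EuclideanSpace ℝ (Fin n)) ≃ₗ[ℝ]
    (EuclideanSpace ℝ (Fin n) × EuclideanSpace ℝ (Fin n)) where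
  toFun p := (p.1 - c • p.2, p.1 + p.2)
  invFun q := ((1 + c)⁻¹ • (q.1 + c • q.2), (1 + c)⁻¹ • (q.2 - q.1))
  map_add' p q := by refine Prod.ext ?_ ?_ <;> simp <;> module
  map_smul' r p := by refine Prod.ext ?_ ?_ <;> simp <;> module
  left_inv p := by
    have h : (1:ℝ) + c ≠ 0 := hc.ne'
    refine Prod.ext ?_ ?_ <;> simp only [] <;> match_scalars <;> field_simp <;> ring
  right_inv q := by
    have h : (1:ℝ) + c ≠ 0 := hc.ne'
    refine Prod.ext ?_ ?_ <;> simp only [] <;> match_scalars <;> field_simp <;> ring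

noncomputable def Tmeas (n : ℕ) (c : ℝ) (hc : 0 < 1 + c) :
    (EuclideanSpace ℝ (Fin n) × EuclideanSpace ℝ (Fin n)) ≃ᵐ
    (EuclideanSpace ℝ (Fin n) × EuclideanSpace ℝ (Fin n)) :=
  (Tequiv n c hc).toContinuousLinearEquiv.toHomeomorph.toMeasurableEquiv

lemma Tmeas_apply (c : ℝ) (hc : 0 < 1 + c) (p : E × E) :
    Tmeas n c hc p = (p.1 - c • p.2, p.1 + p.2) := rfl

lemma Tmeas_symm_apply (c : ℝ) (hc : 0 < 1 + c) (q : E × E) :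
    (Tmeas n c hc).symm q = ((1 + c)⁻¹ • (q.1 + c • q.2), (1 + c)⁻¹ • (q.2 - q.1)) := rfl

lemma Tmeas_coe (c : ℝ) (hc : 0 < 1 + c) :
    ⇑(Tmeas n c hc) = ⇑((Tequiv n c hc : (E × E) →ₗ[ℝ] (E × E))) := rfl

instance : (volume : Measure (E × E)).IsAddHaarMeasure := by
  rw [Measure.volume_eq_prod]
  exact Measure.prod.instIsAddHaarMeasure _ _

lemma map_withDensity_equiv {α β : Type*} [MeasurableSpace α] [MeasurableSpace β]
    (e : α ≃ᵐ β) (μ : Measure α) {f : α → ENNReal} (hf : Measurable f) :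
    Measure.map e (μ.withDensity f) = (Measure.map e μ).withDensity (f ∘ e.symm) := by
  ext s hs
  rw [Measure.map_apply e.measurable hs, withDensity_apply _ (e.measurable hs),
    withDensity_apply _ hs, setLIntegral_map hs (hf.comp e.symm.measurable) e.measurable]
  refine lintegral_congr fun x => ?_
  simp

lemma scalar_exponent {σ γ : ℝ} (hσ : 0 < σ) (hγ : 0 < γ) (A B I : ℝ) :
    -(((1 + σ^2/γ^2)⁻¹)^2 * (A + 2*(σ^2/γ^2*I) + (σ^2/γ^2)^2*B)) / (2*σ^2) +
      -(((1 + σ^2/γ^2)⁻¹)^2 * (B - 2*I + A)) / (2*γ^2)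
      = -A/(2*(σ^2*(σ^2+γ^2)/γ^2)) + -B/(2*(σ^2+γ^2)) := by
  have h1 : σ ≠ 0 := hσ.ne'
  have h2 : γ ≠ 0 := hγ.ne'
  have h3 : σ^2 + γ^2 ≠ 0 := by positivity
  have h4 : (1:ℝ) + σ^2/γ^2 ≠ 0 := by positivity
  field_simp
  ring


lemma gd_transform {σ γ : ℝ} (hσ : 0 < σ) (hγ : 0 < γ) (β : E) (q : E × E) :
    gd n β (σ^2) ((1 + σ^2/γ^2)⁻¹ • (q.1 + (σ^2/γ^2) • q.2)) *
      gd n 0 (γ^2) ((1 + σ^2/γ^2)⁻¹ • (q.2 - q.1))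
    = (((2*π*σ^2) ^ (-(n:ℝ)/2) * (2*π*γ^2) ^ (-(n:ℝ)/2)) /
        ((2*π*(σ^2*(σ^2+γ^2)/γ^2)) ^ (-(n:ℝ)/2) * (2*π*(σ^2+γ^2)) ^ (-(n:ℝ)/2))) *
      (gd n β (σ^2*(σ^2+γ^2)/γ^2) q.1 * gd n β (σ^2+γ^2) q.2) := by
  set c : ℝ := σ^2/γ^2 with hcdef
  have hcpos : 0 < c := by positivity
  have hc : (0:ℝ) < 1 + c := by linarith
  have hcne : (1:ℝ) + c ≠ 0 := hc.ne'
  set a : E := q.1 - β with hadef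
  set b : E := q.2 - β with hbdef
  have hy : (1 + c)⁻¹ • (q.1 + c • q.2) - β = (1 + c)⁻¹ • (a + c • b) := by
    rw [hadef, hbdef]
    match_scalars <;> field_simp <;> ring
  have hw : (1 + c)⁻¹ • (q.2 - q.1) - 0 = (1 + c)⁻¹ • (b - a) := by
    rw [hadef, hbdef]
    match_scalars <;> field_simp <;> ring
  have hnsmul : ∀ z : E, ‖(1 + c)⁻¹ • z‖^2 = ((1 + c)⁻¹)^2 * ‖z‖^2 := by
    intro z
    rw [norm_smul, mul_pow, Real.norm_eq_abs, sq_abs]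
  have e1 : ‖(1 + c)⁻¹ • (q.1 + c • q.2) - β‖^2
      = ((1 + c)⁻¹)^2 * (‖a‖^2 + 2*(c * inner ℝ a b) + c^2*‖b‖^2) := by
    rw [hy, hnsmul]
    congr 1
    rw [norm_add_sq_real, real_inner_smul_right, norm_smul, Real.norm_eq_abs,
      abs_of_pos hcpos, mul_pow]
  have e2 : ‖(1 + c)⁻¹ • (q.2 - q.1) - 0‖^2
      = ((1 + c)⁻¹)^2 * (‖b‖^2 - 2*(inner ℝ a b : ℝ) + ‖a‖^2) := by
    rw [hw, hnsmul]
    congr 1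
    rw [norm_sub_sq_real, real_inner_comm]
  unfold gd
  rw [e1, e2]
  set A : ℝ := ‖a‖^2
  set B : ℝ := ‖b‖^2
  set I : ℝ := (inner ℝ a b : ℝ)
  have hexp : rexp (-(((1 + c)⁻¹)^2 * (A + 2*(c*I) + c^2*B)) / (2*σ^2)) *
      rexp (-(((1 + c)⁻¹)^2 * (B - 2*I + A)) / (2*γ^2))
      = rexp (-A/(2*(σ^2*(σ^2+γ^2)/γ^2))) * rexp (-B/(2*(σ^2+γ^2))) := by
    rw [← Real.exp_add, ← Real.exp_add]
    exact congrArg rexp (scalar_exponent hσ hγ A B I)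
  have hconst : (2*π*σ^2) ^ (-(n:ℝ)/2) * (2*π*γ^2) ^ (-(n:ℝ)/2)
      = (((2*π*σ^2) ^ (-(n:ℝ)/2) * (2*π*γ^2) ^ (-(n:ℝ)/2)) /
          ((2*π*(σ^2*(σ^2+γ^2)/γ^2)) ^ (-(n:ℝ)/2) * (2*π*(σ^2+γ^2)) ^ (-(n:ℝ)/2))) *
        ((2*π*(σ^2*(σ^2+γ^2)/γ^2)) ^ (-(n:ℝ)/2) * (2*π*(σ^2+γ^2)) ^ (-(n:ℝ)/2)) := by
    have p1 : (0:ℝ) < (2*π*(σ^2*(σ^2+γ^2)/γ^2)) ^ (-(n:ℝ)/2) :=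
      Real.rpow_pos_of_pos (by positivity) _
    have p2 : (0:ℝ) < (2*π*(σ^2+γ^2)) ^ (-(n:ℝ)/2) :=
      Real.rpow_pos_of_pos (by positivity) _
    field_simp
  calc (2*π*σ^2) ^ (-(n:ℝ)/2) * rexp (-(((1 + c)⁻¹)^2 * (A + 2*(c*I) + c^2*B)) / (2*σ^2)) *
        ((2*π*γ^2) ^ (-(n:ℝ)/2) * rexp (-(((1 + c)⁻¹)^2 * (B - 2*I + A)) / (2*γ^2)))
      = ((2*π*σ^2) ^ (-(n:ℝ)/2) * (2*π*γ^2) ^ (-(n:ℝ)/2)) *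
        (rexp (-(((1 + c)⁻¹)^2 * (A + 2*(c*I) + c^2*B)) / (2*σ^2)) *
          rexp (-(((1 + c)⁻¹)^2 * (B - 2*I + A)) / (2*γ^2))) := by ring
    _ = ((((2*π*σ^2) ^ (-(n:ℝ)/2) * (2*π*γ^2) ^ (-(n:ℝ)/2)) /
          ((2*π*(σ^2*(σ^2+γ^2)/γ^2)) ^ (-(n:ℝ)/2) * (2*π*(σ^2+γ^2)) ^ (-(n:ℝ)/2))) *
        ((2*π*(σ^2*(σ^2+γ^2)/γ^2)) ^ (-(n:ℝ)/2) * (2*π*(σ^2+γ^2)) ^ (-(n:ℝ)/2))) *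
        (rexp (-A/(2*(σ^2*(σ^2+γ^2)/γ^2))) * rexp (-B/(2*(σ^2+γ^2)))) := by
        rw [← hconst, hexp]
    _ = (((2*π*σ^2) ^ (-(n:ℝ)/2) * (2*π*γ^2) ^ (-(n:ℝ)/2)) /
          ((2*π*(σ^2*(σ^2+γ^2)/γ^2)) ^ (-(n:ℝ)/2) * (2*π*(σ^2+γ^2)) ^ (-(n:ℝ)/2))) *
        ((2*π*(σ^2*(σ^2+γ^2)/γ^2)) ^ (-(n:ℝ)/2) * rexp (-A/(2*(σ^2*(σ^2+γ^2)/γ^2))) *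
          ((2*π*(σ^2+γ^2)) ^ (-(n:ℝ)/2) * rexp (-B/(2*(σ^2+γ^2))))) := by ring


lemma map_T_gm {σ γ : ℝ} (hσ : 0 < σ) (hγ : 0 < γ) (β : E) (hc : (0:ℝ) < 1 + σ^2/γ^2) :
    Measure.map (Tmeas n (σ^2/γ^2) hc) ((gm n β (σ^2)).prod (gm n 0 (γ^2))) =
      (gm n β (σ^2*(σ^2+γ^2)/γ^2)).prod (gm n β (σ^2+γ^2)) := by
  have ht1 : (0:ℝ) < σ^2 := by positivity
  have ht2 : (0:ℝ) < γ^2 := by positivity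
  have hu : (0:ℝ) < σ^2*(σ^2+γ^2)/γ^2 := by positivity
  have hv : (0:ℝ) < σ^2+γ^2 := by positivity
  have hK0 : (0:ℝ) ≤ ((2*π*σ^2) ^ (-(n:ℝ)/2) * (2*π*γ^2) ^ (-(n:ℝ)/2)) /
      ((2*π*(σ^2*(σ^2+γ^2)/γ^2)) ^ (-(n:ℝ)/2) * (2*π*(σ^2+γ^2)) ^ (-(n:ℝ)/2)) := by positivity
  have hFmeas : Measurable fun p : E × E =>
      ENNReal.ofReal (gd n β (σ^2) p.1 * gd n 0 (γ^2) p.2) :=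
    (((measurable_gd β (σ^2)).comp measurable_fst).mul
      ((measurable_gd 0 (γ^2)).comp measurable_snd)).ennreal_ofReal
  have hGmeas : Measurable fun q : E × E =>
      ENNReal.ofReal (gd n β (σ^2*(σ^2+γ^2)/γ^2) q.1 * gd n β (σ^2+γ^2) q.2) :=
    (((measurable_gd β (σ^2*(σ^2+γ^2)/γ^2))).comp measurable_fst).mul
      (((measurable_gd β (σ^2+γ^2))).comp measurable_snd) |>.ennreal_ofReal
  have hdet : LinearMap.det ((Tequiv n (σ^2/γ^2) hc : (E × E) →ₗ[ℝ] (E × E))) ≠ 0 :=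
    (LinearEquiv.isUnit_det' (Tequiv n (σ^2/γ^2) hc)).ne_zero
  have h2 : Measure.map (Tmeas n (σ^2/γ^2) hc) ((gm n β (σ^2)).prod (gm n 0 (γ^2)))
      = (Measure.map (Tmeas n (σ^2/γ^2) hc) (volume : Measure (E × E))).withDensity
          ((fun p => ENNReal.ofReal (gd n β (σ^2) p.1 * gd n 0 (γ^2) p.2)) ∘
            (Tmeas n (σ^2/γ^2) hc).symm) := by
    rw [gm_prod β 0 ht1 ht2, map_withDensity_equiv _ _ hFmeas]
  have h3 : Measure.map (Tmeas n (σ^2/γ^2) hc) (volume : Measure (E × E)) =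
      ENNReal.ofReal |(LinearMap.det ((Tequiv n (σ^2/γ^2) hc : (E × E) →ₗ[ℝ] (E × E))))⁻¹| •
        (volume : Measure (E × E)) := by
    rw [Tmeas_coe]
    exact Measure.map_linearMap_addHaar_eq_smul_addHaar _ hdet
  have h4 : ((fun p => ENNReal.ofReal (gd n β (σ^2) p.1 * gd n 0 (γ^2) p.2)) ∘
        (Tmeas n (σ^2/γ^2) hc).symm)
      = fun q => ENNReal.ofReal (((2*π*σ^2) ^ (-(n:ℝ)/2) * (2*π*γ^2) ^ (-(n:ℝ)/2)) /
          ((2*π*(σ^2*(σ^2+γ^2)/γ^2)) ^ (-(n:ℝ)/2) * (2*π*(σ^2+γ^2)) ^ (-(n:ℝ)/2))) *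
        ENNReal.ofReal (gd n β (σ^2*(σ^2+γ^2)/γ^2) q.1 * gd n β (σ^2+γ^2) q.2) := by
    funext q
    simp only [Function.comp_apply, Tmeas_symm_apply]
    show ENNReal.ofReal (gd n β (σ^2) ((1 + σ^2/γ^2)⁻¹ • (q.1 + (σ^2/γ^2) • q.2)) *
      gd n 0 (γ^2) ((1 + σ^2/γ^2)⁻¹ • (q.2 - q.1))) = _
    rw [gd_transform hσ hγ β q, ENNReal.ofReal_mul hK0]
  have h5 : Measure.map (Tmeas n (σ^2/γ^2) hc) ((gm n β (σ^2)).prod (gm n 0 (γ^2)))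
      = (ENNReal.ofReal |(LinearMap.det ((Tequiv n (σ^2/γ^2) hc : (E × E) →ₗ[ℝ] (E × E))))⁻¹| *
          ENNReal.ofReal (((2*π*σ^2) ^ (-(n:ℝ)/2) * (2*π*γ^2) ^ (-(n:ℝ)/2)) /
          ((2*π*(σ^2*(σ^2+γ^2)/γ^2)) ^ (-(n:ℝ)/2) * (2*π*(σ^2+γ^2)) ^ (-(n:ℝ)/2)))) •
        (volume : Measure (E × E)).withDensity
          (fun q => ENNReal.ofReal (gd n β (σ^2*(σ^2+γ^2)/γ^2) q.1 * gd n β (σ^2+γ^2) q.2)) := by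
    rw [h2, h3, h4, withDensity_smul_measure]
    rw [show (fun q : E × E => ENNReal.ofReal (((2*π*σ^2) ^ (-(n:ℝ)/2) * (2*π*γ^2) ^ (-(n:ℝ)/2)) /
          ((2*π*(σ^2*(σ^2+γ^2)/γ^2)) ^ (-(n:ℝ)/2) * (2*π*(σ^2+γ^2)) ^ (-(n:ℝ)/2))) *
        ENNReal.ofReal (gd n β (σ^2*(σ^2+γ^2)/γ^2) q.1 * gd n β (σ^2+γ^2) q.2))
      = (ENNReal.ofReal (((2*π*σ^2) ^ (-(n:ℝ)/2) * (2*π*γ^2) ^ (-(n:ℝ)/2)) /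
          ((2*π*(σ^2*(σ^2+γ^2)/γ^2)) ^ (-(n:ℝ)/2) * (2*π*(σ^2+γ^2)) ^ (-(n:ℝ)/2)))) •
        (fun q : E × E => ENNReal.ofReal (gd n β (σ^2*(σ^2+γ^2)/γ^2) q.1 *
          gd n β (σ^2+γ^2) q.2)) from rfl]
    rw [withDensity_smul _ hGmeas, smul_smul]
  have hGmass : (volume : Measure (E × E)).withDensity
      (fun q => ENNReal.ofReal (gd n β (σ^2*(σ^2+γ^2)/γ^2) q.1 * gd n β (σ^2+γ^2) q.2))
      Set.univ = 1 := by
    rw [withDensity_apply _ MeasurableSet.univ, Measure.restrict_univ]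
    have hsplit : ∀ q : E × E, ENNReal.ofReal (gd n β (σ^2*(σ^2+γ^2)/γ^2) q.1 *
        gd n β (σ^2+γ^2) q.2) = ENNReal.ofReal (gd n β (σ^2*(σ^2+γ^2)/γ^2) q.1) *
        ENNReal.ofReal (gd n β (σ^2+γ^2) q.2) :=
      fun q => ENNReal.ofReal_mul (gd_nonneg _ hu _)
    simp_rw [hsplit]
    rw [Measure.volume_eq_prod,
      lintegral_prod_mul ((measurable_gd β (σ^2*(σ^2+γ^2)/γ^2)).ennreal_ofReal).aemeasurable
        ((measurable_gd β (σ^2+γ^2)).ennreal_ofReal).aemeasurable,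
      lintegral_gd _ hu, lintegral_gd _ hv, one_mul]
  have hprob : IsProbabilityMeasure
      (Measure.map (Tmeas n (σ^2/γ^2) hc) ((gm n β (σ^2)).prod (gm n 0 (γ^2)))) := by
    haveI := isProb_gm (n := n) β ht1
    haveI := isProb_gm (n := n) (0 : E) ht2
    exact Measure.isProbabilityMeasure_map (Tmeas n (σ^2/γ^2) hc).measurable.aemeasurable
  have hD : (ENNReal.ofReal |(LinearMap.det ((Tequiv n (σ^2/γ^2) hc : (E × E) →ₗ[ℝ] (E × E))))⁻¹| *
          ENNReal.ofReal (((2*π*σ^2) ^ (-(n:ℝ)/2) * (2*π*γ^2) ^ (-(n:ℝ)/2)) /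
          ((2*π*(σ^2*(σ^2+γ^2)/γ^2)) ^ (-(n:ℝ)/2) * (2*π*(σ^2+γ^2)) ^ (-(n:ℝ)/2)))) = 1 := by
    have hm := hprob.measure_univ
    rw [h5] at hm
    rw [Measure.smul_apply, hGmass, smul_eq_mul, mul_one] at hm
    exact hm
  rw [h5, hD, one_smul, gm_prod β β hu hv]

end Stmt16Aux

open Stmt16Aux in
/-- With `Y ~ N_n(β*, σ²I)` and independent randomization `W ~ N_n(0, γ²I)`, the statistic
`β̂* = Y - (σ²/γ²)W` is unbiased for `β*`, independent of `Y* = Y + W`, and remains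
unbiased conditional on any selection event `{A Y* ≤ b}` of positive probability. -/
theorem stmt16 {n : ℕ} {Ω : Type*} [MeasurableSpace Ω] (P : Measure Ω)
    [IsProbabilityMeasure P]
    (Y W : Ω → EuclideanSpace ℝ (Fin n)) (hY : Measurable Y) (hW : Measurable W)
    (β : EuclideanSpace ℝ (Fin n)) (σ γ : ℝ) (hσ : 0 < σ) (hγ : 0 < γ)
    (hYlaw : Measure.map Y P = volume.withDensity (fun x => ENNReal.ofReal
      ((2 * Real.pi * σ ^ 2) ^ (-(n : ℝ) / 2) * Real.exp (-‖x - β‖ ^ 2 / (2 * σ ^ 2)))))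
    (hWlaw : Measure.map W P = volume.withDensity (fun x => ENNReal.ofReal
      ((2 * Real.pi * γ ^ 2) ^ (-(n : ℝ) / 2) * Real.exp (-‖x‖ ^ 2 / (2 * γ ^ 2)))))
    (hindep : IndepFun Y W P) :
    (∫ ω, (Y ω - (σ ^ 2 / γ ^ 2) • W ω) ∂P = β) ∧
    IndepFun (fun ω => Y ω - (σ ^ 2 / γ ^ 2) • W ω) (fun ω => Y ω + W ω) P ∧
    (∀ (m : ℕ) (A : Matrix (Fin m) (Fin n) ℝ) (b : Fin m → ℝ),
      0 < P {ω | ∀ i, A.mulVec (fun j => (Y ω + W ω) j) i ≤ b i} →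
      ∫ ω, (Y ω - (σ ^ 2 / γ ^ 2) • W ω)
        ∂(P[|{ω | ∀ i, A.mulVec (fun j => (Y ω + W ω) j) i ≤ b i}]) = β) := by
  have ht1 : (0:ℝ) < σ^2 := by positivity
  have ht2 : (0:ℝ) < γ^2 := by positivity
  have hu : (0:ℝ) < σ^2*(σ^2+γ^2)/γ^2 := by positivity
  have hv : (0:ℝ) < σ^2+γ^2 := by positivity
  have hc : (0:ℝ) < 1 + σ^2/γ^2 := by positivity
  have hY' : Measure.map Y P = gm n β (σ^2) := by rw [hYlaw]; rfl
  have hW' : Measure.map W P = gm n (0 : EuclideanSpace ℝ (Fin n)) (γ^2) := by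
    rw [hWlaw]; unfold gm gd; congr 1; funext x; rw [sub_zero]
  have hbm : Measurable fun ω => Y ω - (σ^2/γ^2) • W ω := hY.sub (hW.const_smul (σ^2/γ^2))
  have hsm : Measurable fun ω => Y ω + W ω := hY.add hW
  have hpairm : Measurable fun ω => (Y ω, W ω) := hY.prodMk hW
  have hpair : Measure.map (fun ω => (Y ω, W ω)) P
      = (gm n β (σ^2)).prod (gm n 0 (γ^2)) := by
    rw [← hY', ← hW']
    exact (indepFun_iff_map_prod_eq_prod_map_map hY.aemeasurable hW.aemeasurable).mp hindep
  have hcomp : (fun ω => (Y ω - (σ^2/γ^2) • W ω, Y ω + W ω))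
      = (Tmeas n (σ^2/γ^2) hc) ∘ (fun ω => (Y ω, W ω)) := rfl
  have hjoint : Measure.map (fun ω => (Y ω - (σ^2/γ^2) • W ω, Y ω + W ω)) P
      = (gm n β (σ^2*(σ^2+γ^2)/γ^2)).prod (gm n β (σ^2+γ^2)) := by
    rw [hcomp, ← Measure.map_map (Tmeas n (σ^2/γ^2) hc).measurable hpairm, hpair,
      map_T_gm hσ hγ β hc]
  haveI hb1 : IsProbabilityMeasure (gm n β (σ^2*(σ^2+γ^2)/γ^2)) := isProb_gm _ hu
  haveI hb2 : IsProbabilityMeasure (gm n β (σ^2+γ^2)) := isProb_gm _ hv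
  have hfst : Measure.map (fun ω => Y ω - (σ^2/γ^2) • W ω) P
      = gm n β (σ^2*(σ^2+γ^2)/γ^2) := by
    have hre : (fun ω => Y ω - (σ^2/γ^2) • W ω)
        = Prod.fst ∘ (fun ω => (Y ω - (σ^2/γ^2) • W ω, Y ω + W ω)) := rfl
    rw [hre, ← Measure.map_map measurable_fst (hbm.prodMk hsm), hjoint,
      Measure.map_fst_prod, measure_univ, one_smul]
  have hsnd : Measure.map (fun ω => Y ω + W ω) P = gm n β (σ^2+γ^2) := by
    have hre : (fun ω => Y ω + W ω)
        = Prod.snd ∘ (fun ω => (Y ω - (σ^2/γ^2) • W ω, Y ω + W ω)) := rfl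
    rw [hre, ← Measure.map_map measurable_snd (hbm.prodMk hsm), hjoint,
      Measure.map_snd_prod, measure_univ, one_smul]
  have hIndep : IndepFun (fun ω => Y ω - (σ^2/γ^2) • W ω) (fun ω => Y ω + W ω) P := by
    rw [indepFun_iff_map_prod_eq_prod_map_map hbm.aemeasurable hsm.aemeasurable,
      hjoint, hfst, hsnd]
  have hint : Integrable (fun ω => Y ω - (σ^2/γ^2) • W ω) P := by
    have h1 : Integrable (fun x : EuclideanSpace ℝ (Fin n) => x)
        (Measure.map (fun ω => Y ω - (σ^2/γ^2) • W ω) P) := by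
      rw [hfst]; exact integrable_id_gm β hu
    exact (integrable_map_measure aestronglyMeasurable_id hbm.aemeasurable).mp h1
  have hEβ : ∫ ω, (Y ω - (σ^2/γ^2) • W ω) ∂P = β := by
    have h1 : ∫ x, x ∂(Measure.map (fun ω => Y ω - (σ^2/γ^2) • W ω) P)
        = ∫ ω, (Y ω - (σ^2/γ^2) • W ω) ∂P :=
      integral_map hbm.aemeasurable aestronglyMeasurable_id
    rw [hfst, integral_id_gm β hu] at h1
    exact h1.symm
  refine ⟨hEβ, hIndep, ?_⟩
  intro m A b hpos
  set s : Set (EuclideanSpace ℝ (Fin n)) := {v | ∀ i, A.mulVec (fun j => v j) i ≤ b i}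
    with hsdef
  have hs : MeasurableSet s := by
    have hrepr : s = ⋂ i, {v : EuclideanSpace ℝ (Fin n) | A.mulVec (fun j => v j) i ≤ b i} := by
      ext v; simp [hsdef, Set.mem_iInter]
    rw [hrepr]
    refine MeasurableSet.iInter fun i => ?_
    have hmv : Measurable fun v : EuclideanSpace ℝ (Fin n) => A.mulVec (fun j => v j) i := by
      simp only [Matrix.mulVec, dotProduct]
      exact Finset.measurable_sum _ fun j _ => ((measurable_pi_apply j).comp (WithLp.measurable_ofLp 2 (Fin n → ℝ))).const_mul _
    exact measurableSet_le hmv measurable_const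
  have hSrepr : {ω | ∀ i, A.mulVec (fun j => (Y ω + W ω) j) i ≤ b i}
      = (fun ω => Y ω + W ω) ⁻¹' s := rfl
  rw [hSrepr] at hpos ⊢
  set S := (fun ω => Y ω + W ω) ⁻¹' s with hSdef
  have hSmeas : MeasurableSet S := hsm hs
  have hSne : P S ≠ 0 := hpos.ne'
  have hStop : P S ≠ ⊤ := measure_ne_top P S
  have htr : (P S).toReal ≠ 0 := ENNReal.toReal_ne_zero.mpr ⟨hSne, hStop⟩
  have hintc : Integrable (fun ω => Y ω - (σ^2/γ^2) • W ω) (P[|S]) := by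
    rw [ProbabilityTheory.cond]
    exact (hint.restrict).smul_measure (ENNReal.inv_ne_top.mpr hSne)
  have hcoordInt : ∀ i, Integrable (fun ω => (Y ω - (σ^2/γ^2) • W ω) i) P := fun i => by
    refine ((EuclideanSpace.proj (𝕜 := ℝ) i).integrable_comp hint).congr
      (Filter.Eventually.of_forall fun ω => ?_)
    simp
  have hEi : ∀ i, ∫ ω, (Y ω - (σ^2/γ^2) • W ω) i ∂P = β i := fun i => by
    have h2 := (EuclideanSpace.proj (𝕜 := ℝ) i).integral_comp_comm hint
    rw [hEβ] at h2
    simpa using h2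
  ext i
  have h1 : (∫ ω, (Y ω - (σ^2/γ^2) • W ω) ∂(P[|S])) i
      = ∫ ω, (Y ω - (σ^2/γ^2) • W ω) i ∂(P[|S]) := by
    have h2 := (EuclideanSpace.proj (𝕜 := ℝ) i).integral_comp_comm hintc
    simpa using h2.symm
  rw [h1]
  have hindicator : (fun ω => Set.indicator s (fun _ => (1:ℝ)) (Y ω + W ω))
      = Set.indicator S (fun _ => (1:ℝ)) := by
    funext ω
    by_cases hω : Y ω + W ω ∈ s
    · rw [Set.indicator_of_mem hω, Set.indicator_of_mem (show ω ∈ S from hω)]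
    · rw [Set.indicator_of_notMem hω, Set.indicator_of_notMem (show ω ∉ S from hω)]
  have hIndInt : Integrable (fun ω => Set.indicator s (fun _ => (1:ℝ)) (Y ω + W ω)) P := by
    rw [hindicator]
    exact (integrable_const (1:ℝ)).indicator hSmeas
  have hindI : IndepFun (fun ω => (Y ω - (σ^2/γ^2) • W ω) i)
      (fun ω => Set.indicator s (fun _ => (1:ℝ)) (Y ω + W ω)) P :=
    hIndep.comp (φ := fun v : EuclideanSpace ℝ (Fin n) => v i)
      (ψ := Set.indicator s (fun _ => (1:ℝ))) ((measurable_pi_apply i).comp (WithLp.measurable_ofLp 2 (Fin n → ℝ)))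
      (measurable_const.indicator hs)
  have h2 := hindI.integral_fun_mul_eq_mul_integral (hcoordInt i).aestronglyMeasurable hIndInt.aestronglyMeasurable
  have h3 : ∫ ω, Set.indicator S (fun _ => (1:ℝ)) ω ∂P = (P S).toReal := by
    rw [integral_indicator hSmeas]
    simp [measureReal_def]
  have hpt : ∀ ω, Set.indicator s (fun _ => (1:ℝ)) (Y ω + W ω)
      = Set.indicator S (fun _ => (1:ℝ)) ω := fun ω => congrFun hindicator ω
  have h3' : ∫ ω, Set.indicator s (fun _ => (1:ℝ)) (Y ω + W ω) ∂P = (P S).toReal := by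
    simp_rw [hpt]; exact h3
  have hmul : ∫ ω, (Y ω - (σ^2/γ^2) • W ω) i * Set.indicator S (fun _ => (1:ℝ)) ω ∂P
      = β i * (P S).toReal := by
    have h4 : ∫ ω, (Y ω - (σ^2/γ^2) • W ω) i * Set.indicator s (fun _ => (1:ℝ)) (Y ω + W ω) ∂P
        = (∫ ω, (Y ω - (σ^2/γ^2) • W ω) i ∂P) *
          ∫ ω, Set.indicator s (fun _ => (1:ℝ)) (Y ω + W ω) ∂P := h2
    simp_rw [hpt] at h4
    rw [h4, hEi i, h3]
  have hrestr : ∫ ω in S, (Y ω - (σ^2/γ^2) • W ω) i ∂P = β i * (P S).toReal := by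
    rw [← integral_indicator hSmeas, ← hmul]
    congr 1
    funext ω
    by_cases hω : ω ∈ S
    · rw [Set.indicator_of_mem hω, Set.indicator_of_mem hω, mul_one]
    · rw [Set.indicator_of_notMem hω, Set.indicator_of_notMem hω, mul_zero]
  have hcond : ∫ ω, (Y ω - (σ^2/γ^2) • W ω) i ∂(P[|S])
      = ((P S)⁻¹).toReal * ∫ ω in S, (Y ω - (σ^2/γ^2) • W ω) i ∂P := by
    rw [ProbabilityTheory.cond, integral_smul_measure, smul_eq_mul]
  rw [hcond, hrestr, ENNReal.toReal_inv]
  field_simp
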